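/- Let C₃ > 0 and η₀ > 0. There exists a constant C > 0, depending only on C₃ and η₀, with the following property: if A ⊆ ℝ² is any set such that all pairwise distances of distinct points of A are ≥ η₀, and such that for all distinct a, a' ∈ A there exists k ∈ ℕ with | |a − a'| − k/2 − 1/8 | ≤ C₃/(k + 1), then for every q ≥ 1, the number of points of A in the square [−q, q]² is at most C·q. -/

import Mathlib

set_option maxHeartbeats 1000000
open Real Finset
local notation "E2" => EuclideanSpace ℝ (Fin 2)

-- two reals in the same floor-bin of width h are within h
lemma qslg_bin_close {h a b : ℝ} (hh : 0 < h) (e : ⌊a/h⌋ = ⌊b/h⌋) : |a - b| < h := by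
  have h1 := Int.floor_le (a/h)
  have h2 := Int.lt_floor_add_one (a/h)
  have h3 := Int.floor_le (b/h)
  have h4 := Int.lt_floor_add_one (b/h)
  rw [e] at h1 h2
  have ha : a = a/h*h := (div_mul_cancel₀ a hh.ne').symm
  have hb : b = b/h*h := (div_mul_cancel₀ b hh.ne').symm
  rw [abs_sub_lt_iff]
  constructor <;> nlinarith

lemma qslg_card_Icc_real (l u : ℤ) : ((Finset.Icc l u).card : ℝ) ≤ max ((u:ℝ) - l + 1) 0 := by
  rcases le_or_gt l u with h | h
  · rw [Int.card_Icc]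
    have : ((u + 1 - l).toNat : ℤ) = u + 1 - l := Int.toNat_of_nonneg (by omega)
    have h2 : ((u + 1 - l).toNat : ℝ) = (u:ℝ) + 1 - l := by
      have := congrArg (fun n : ℤ => (n : ℝ)) this
      push_cast at this ⊢
      linarith
    rw [h2]
    exact le_max_of_le_left (by linarith)
  · rw [Finset.Icc_eq_empty (by exact_mod_cast not_le.mpr h)]
    simp

-- δ-separated points of a finset inside [lo,hi] number at most (hi-lo)/δ + 2
lemma qslg_card_sep_interval (T : Finset ℝ) (δ lo hi : ℝ) (hδ : 0 < δ) (hlh : lo ≤ hi)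
    (hmem : ∀ x ∈ T, lo ≤ x ∧ x ≤ hi)
    (hsep : ∀ x ∈ T, ∀ y ∈ T, x ≠ y → δ ≤ |x - y|) :
    (T.card : ℝ) ≤ (hi - lo)/δ + 2 := by
  classical
  have hcard : T.card ≤ (Finset.Icc ⌊lo/δ⌋ ⌊hi/δ⌋).card := by
    apply Finset.card_le_card_of_injOn (fun x => ⌊x/δ⌋)
    · intro x hx
      rcases hmem x hx with ⟨h1, h2⟩
      rw [Finset.mem_coe, Finset.mem_Icc]
      exact ⟨Int.floor_mono (by gcongr), Int.floor_mono (by gcongr)⟩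
    · intro x hx y hy hxy
      by_contra hne
      have := hsep x hx y hy hne
      have := qslg_bin_close hδ hxy
      linarith
  have h2 : ((Finset.Icc ⌊lo/δ⌋ ⌊hi/δ⌋).card : ℝ) ≤ max ((⌊hi/δ⌋:ℝ) - ⌊lo/δ⌋ + 1) 0 :=
    qslg_card_Icc_real _ _
  have hfl : (⌊hi/δ⌋:ℝ) ≤ hi/δ := Int.floor_le _
  have hfl2 : lo/δ - 1 < ⌊lo/δ⌋ := by
    have := Int.lt_floor_add_one (lo/δ); linarith
  have hd : lo/δ ≤ hi/δ := by gcongr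
  have : max ((⌊hi/δ⌋:ℝ) - ⌊lo/δ⌋ + 1) 0 ≤ (hi - lo)/δ + 2 := by
    apply max_le
    · have : hi/δ - lo/δ = (hi - lo)/δ := by ring
      linarith
    · have : 0 ≤ (hi - lo)/δ := div_nonneg (by linarith) hδ.le
      linarith
  calc (T.card : ℝ) ≤ _ := by exact_mod_cast hcard
    _ ≤ _ := h2
    _ ≤ _ := this


lemma qslg_dist_eq (x y : E2) :
    dist x y = Real.sqrt ((x 0 - y 0)^2 + (x 1 - y 1)^2) := by
  rw [EuclideanSpace.dist_eq, Fin.sum_univ_two]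
  simp [Real.dist_eq, sq_abs]

lemma qslg_coord_le (x y : E2) (i : Fin 2) : |x i - y i| ≤ dist x y := by
  rw [qslg_dist_eq]
  rw [show |x i - y i| = Real.sqrt ((x i - y i)^2) by rw [Real.sqrt_sq_eq_abs]]
  apply Real.sqrt_le_sqrt
  fin_cases i
  · exact le_add_of_nonneg_right (sq_nonneg _)
  · exact le_add_of_nonneg_left (sq_nonneg _)

lemma qslg_dist_lt {x y : E2} {h : ℝ} (hh : 0 < h)
    (h0 : |x 0 - y 0| < h) (h1 : |x 1 - y 1| < h) : dist x y < 2 * h := by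
  rw [qslg_dist_eq]
  have : (x 0 - y 0)^2 + (x 1 - y 1)^2 < (2*h)^2 := by
    nlinarith [abs_nonneg (x 0 - y 0), abs_nonneg (x 1 - y 1), sq_abs (x 0 - y 0), sq_abs (x 1 - y 1)]
  calc Real.sqrt ((x 0 - y 0)^2 + (x 1 - y 1)^2) < Real.sqrt ((2*h)^2) :=
        Real.sqrt_lt_sqrt (by positivity) this
    _ = 2*h := Real.sqrt_sq (by positivity)

-- packing: η-separated finset within distance R of p has ≤ (4R/η+2)^2 points
lemma qslg_card_sep_ball (T : Finset E2) (η R : ℝ) (hη : 0 < η) (hR : 0 < R)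
    (p : E2) (hmem : ∀ x ∈ T, dist x p ≤ R)
    (hsep : ∀ x ∈ T, ∀ y ∈ T, x ≠ y → η ≤ dist x y) :
    (T.card : ℝ) ≤ (4*R/η + 2)^2 := by
  classical
  set h : ℝ := η/2 with hh
  have hhpos : 0 < h := by positivity
  set f : E2 → ℤ × ℤ := fun x => (⌊x 0 / h⌋, ⌊x 1 / h⌋) with hf
  set G : Finset (ℤ × ℤ) :=
    (Finset.Icc ⌊(p 0 - R)/h⌋ ⌊(p 0 + R)/h⌋) ×ˢ (Finset.Icc ⌊(p 1 - R)/h⌋ ⌊(p 1 + R)/h⌋) with hG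
  have hcard : T.card ≤ G.card := by
    apply Finset.card_le_card_of_injOn f
    · intro x hx
      have hco : ∀ i, |x i - p i| ≤ R := fun i => (qslg_coord_le x p i).trans (hmem x hx)
      have g0 := hco 0; have g1 := hco 1
      rw [abs_le] at g0 g1
      simp only [hG, Finset.mem_coe, Finset.mem_product, Finset.mem_Icc, hf]
      exact ⟨⟨Int.floor_mono (by gcongr; linarith), Int.floor_mono (by gcongr; linarith)⟩,
             ⟨Int.floor_mono (by gcongr; linarith), Int.floor_mono (by gcongr; linarith)⟩⟩
    · intro x hx y hy hxy
      by_contra hne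
      have hs := hsep x hx y hy hne
      simp only [hf, Prod.mk.injEq] at hxy
      have d0 := qslg_bin_close hhpos hxy.1
      have d1 := qslg_bin_close hhpos hxy.2
      have := qslg_dist_lt hhpos d0 d1
      rw [hh] at this
      linarith
  have hG1 : ∀ (a : ℝ), ((Finset.Icc ⌊(a - R)/h⌋ ⌊(a + R)/h⌋).card : ℝ) ≤ 4*R/η + 2 := by
    intro a
    refine (qslg_card_Icc_real _ _).trans (max_le ?_ ?_)
    · have f1 : (⌊(a + R)/h⌋ : ℝ) ≤ (a+R)/h := Int.floor_le _
      have f2 : (a-R)/h - 1 < (⌊(a - R)/h⌋ : ℝ) := by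
        have := Int.lt_floor_add_one ((a-R)/h); linarith
      have : (a+R)/h - (a-R)/h = 4*R/η := by
        rw [hh]; field_simp; ring
      linarith
    · positivity
  have hGcard : (G.card : ℝ) ≤ (4*R/η + 2)^2 := by
    rw [hG, Finset.card_product]
    push_cast
    have b0 := hG1 (p 0); have b1 := hG1 (p 1)
    have n0 : (0:ℝ) ≤ ((Finset.Icc ⌊(p 0 - R)/h⌋ ⌊(p 0 + R)/h⌋).card : ℝ) := Nat.cast_nonneg _
    nlinarith
  calc (T.card : ℝ) ≤ (G.card : ℝ) := by exact_mod_cast hcard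
    _ ≤ _ := hGcard


lemma qslg_dist_complex (x y : E2) :
    dist x y = ‖(⟨x 0 - y 0, x 1 - y 1⟩ : ℂ)‖ := by
  rw [qslg_dist_eq, Complex.norm_def, Complex.normSq_apply]
  norm_num [pow_two]

-- the quantization error is ≤ 1/100 for far pairs
lemma qslg_small_err {C₃ d : ℝ} (hC₃ : 0 < C₃) (k : ℕ)
    (hk : |d - (k:ℝ)/2 - 1/8| ≤ C₃ / ((k:ℝ)+1)) (hd : 100*(C₃+1) ≤ d) :
    |d - (k:ℝ)/2 - 1/8| ≤ 1/100 := by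
  have hk1 : (0:ℝ) < (k:ℝ) + 1 := by positivity
  have h1 : C₃ / ((k:ℝ)+1) ≤ C₃ := by
    rw [div_le_iff₀ hk1]; nlinarith
  have habs := (abs_le.mp hk).2
  have hklarge : 100 * C₃ ≤ (k:ℝ) + 1 := by linarith
  refine hk.trans ?_
  rw [div_le_iff₀ hk1]; nlinarith

-- the triple gap: far triples satisfy a strict triangle inequality
lemma qslg_gap {C₃ : ℝ} (hC₃ : 0 < C₃) {dab dbc dac : ℝ}
    (k1 k2 k3 : ℕ)
    (h1 : |dab - (k1:ℝ)/2 - 1/8| ≤ C₃ / ((k1:ℝ)+1))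
    (h2 : |dbc - (k2:ℝ)/2 - 1/8| ≤ C₃ / ((k2:ℝ)+1))
    (h3 : |dac - (k3:ℝ)/2 - 1/8| ≤ C₃ / ((k3:ℝ)+1))
    (hd1 : 100*(C₃+1) ≤ dab) (hd2 : 100*(C₃+1) ≤ dbc) (hd3 : 100*(C₃+1) ≤ dac)
    (htri : dac ≤ dab + dbc) :
    1/20 ≤ dab + dbc - dac := by
  have e1 := abs_le.mp (qslg_small_err hC₃ k1 h1 hd1)
  have e2 := abs_le.mp (qslg_small_err hC₃ k2 h2 hd2)
  have e3 := abs_le.mp (qslg_small_err hC₃ k3 h3 hd3)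
  have hm : (0:ℝ) ≤ (k1:ℝ) + k2 - k3 := by
    by_contra hneg
    push_neg at hneg
    have : (k3:ℕ) ≥ k1 + k2 + 1 := by
      by_contra hc
      push_neg at hc
      have : (k3:ℝ) ≤ (k1:ℝ) + k2 := by exact_mod_cast Nat.lt_succ_iff.mp hc
      linarith
    have : (k1:ℝ) + k2 + 1 ≤ (k3:ℝ) := by exact_mod_cast this
    linarith
  linarith

-- main angle separation lemma (works with complex coordinates)
lemma qslg_angle_sep {wb wc : ℂ} {t s q : ℝ}
    (ht : ‖wb‖ = t) (hs : ‖wc‖ = s)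
    (htpos : 0 < t) (hspos : 0 < s)
    (hts : t ≤ 3*q) (hss : s ≤ 3*q) (hq : 1 ≤ q)
    (hgap1 : s - t + 1/20 ≤ ‖wb - wc‖)
    (hgap2 : t - s + 1/20 ≤ ‖wb - wc‖) :
    1/(60*q) ≤ |wb.arg - wc.arg| := by
  have hwb : wb ≠ 0 := by
    intro h; rw [h] at ht; simp at ht; linarith
  have hwc : wc ≠ 0 := by
    intro h; rw [h] at hs; simp at hs; linarith
  set xb := wb.re; set yb := wb.im; set xc := wc.re; set yc := wc.im
  have ht2 : t^2 = xb^2 + yb^2 := by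
    rw [← ht, Complex.sq_norm, Complex.normSq_apply]; ring
  have hs2 : s^2 = xc^2 + yc^2 := by
    rw [← hs, Complex.sq_norm, Complex.normSq_apply]; ring
  -- squared distance bound
  have hD : ‖wb - wc‖ ^ 2 = (xb - xc)^2 + (yb - yc)^2 := by
    rw [Complex.sq_norm, Complex.normSq_apply]
    simp [Complex.sub_re, Complex.sub_im]; ring
  have hd0 : 0 ≤ ‖wb - wc‖ := norm_nonneg _
  have hDge : (xb - xc)^2 + (yb - yc)^2 ≥ (s - t)^2 + 1/400 := by
    rw [← hD]
    nlinarith [mul_nonneg (by linarith : (0:ℝ) ≤ ‖wb - wc‖ - 1/20 - (s - t))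
      (by linarith : (0:ℝ) ≤ ‖wb - wc‖ - 1/20 + (s - t))]
  -- inner product bound
  have hip : xb*xc + yb*yc ≤ t*s - 1/800 := by nlinarith
  -- cosine of angle difference
  have hcosb : Real.cos wb.arg = xb / t := by rw [Complex.cos_arg hwb, ht]
  have hsinb : Real.sin wb.arg = yb / t := by rw [Complex.sin_arg, ht]
  have hcosc : Real.cos wc.arg = xc / s := by rw [Complex.cos_arg hwc, hs]
  have hsinc : Real.sin wc.arg = yc / s := by rw [Complex.sin_arg, hs]
  have hcosd : Real.cos (wb.arg - wc.arg) = (xb*xc + yb*yc)/(t*s) := by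
    rw [Real.cos_sub, hcosb, hsinb, hcosc, hsinc]
    field_simp
  have htspos : (0:ℝ) < t*s := mul_pos htpos hspos
  have hcd : Real.cos (wb.arg - wc.arg) ≤ 1 - 1/(800*(t*s)) := by
    rw [hcosd, div_le_iff₀ htspos]
    have heq : (1 - 1/(800*(t*s))) * (t*s) = t*s - 1/800 := by
      field_simp
    rw [heq]
    linarith
  have hlow := Real.one_sub_sq_div_two_le_cos (x := wb.arg - wc.arg)
  have h8 : 1/(800*(t*s)) ≤ (wb.arg - wc.arg)^2 / 2 := by linarith
  have hsq : 1/(400*(t*s)) ≤ (wb.arg - wc.arg)^2 := by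
    have : (1:ℝ)/(400*(t*s)) = 2 * (1/(800*(t*s))) := by ring
    linarith
  have hq2 : t*s ≤ 9*q^2 := by nlinarith
  by_contra hcon
  push_neg at hcon
  have hts9 : (1:ℝ)/(3600*q^2) ≤ 1/(400*(t*s)) := by
    exact one_div_le_one_div_of_le (by linarith) (by linarith)
  have hm := mul_self_lt_mul_self (abs_nonneg (wb.arg - wc.arg)) hcon
  rw [abs_mul_abs_self] at hm
  have hqpos : (0:ℝ) < q := by linarith
  have heq2 : 1/(60*q) * (1/(60*q)) = 1/(3600*q^2) := by
    field_simp; ring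
  rw [heq2] at hm
  have hpow : (wb.arg - wc.arg)^2 = (wb.arg - wc.arg) * (wb.arg - wc.arg) := by ring
  rw [← hpow] at hm
  linarith

/-- **Linear growth of quantized separated sets in the plane.**
Given `C₃ > 0` and `η₀ > 0`, there is `C > 0` such that every `η₀`-separated
set `A ⊆ ℝ²` whose pairwise distances satisfy `||a − a'| − k/2 − 1/8| ≤ C₃/(k+1)`
for some `k ∈ ℕ` has at most `C·q` points in the square `[−q, q]²` for every
`q ≥ 1`. -/
theorem quantized_set_linear_growth (C₃ η₀ : ℝ) (hC₃ : 0 < C₃) (hη₀ : 0 < η₀) :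
    ∃ C > (0 : ℝ),
      ∀ A : Set (EuclideanSpace ℝ (Fin 2)),
        (∀ a ∈ A, ∀ a' ∈ A, a ≠ a' → η₀ ≤ dist a a') →
        (∀ a ∈ A, ∀ a' ∈ A, a ≠ a' →
          ∃ k : ℕ, |dist a a' - (k : ℝ) / 2 - 1 / 8| ≤ C₃ / ((k : ℝ) + 1)) →
        ∀ q : ℝ, 1 ≤ q →
          (A ∩ {x | ∀ i, |x i| ≤ q}).Finite ∧
          ((A ∩ {x | ∀ i, |x i| ≤ q}).ncard : ℝ) ≤ C * q := by
  classical
  set R : ℝ := 100*(C₃+1) with hRdef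
  have hRpos : 0 < R := by rw [hRdef]; linarith
  set K : ℝ := (4*R/η₀ + 2)^2 with hKdef
  have hKpos : 0 < K := by rw [hKdef]; positivity
  refine ⟨483 * K, by positivity, ?_⟩
  intro A hsep hquant q hq
  have hq0 : (0:ℝ) < q := by linarith
  set S := A ∩ {x | ∀ i, |x i| ≤ q} with hSdef
  have hSA : ∀ x ∈ S, x ∈ A := fun x hx => hx.1
  have hSq : ∀ x ∈ S, ∀ i, |x i| ≤ q := fun x hx => hx.2
  -- distances within the square are at most 3q
  have h3q : ∀ x ∈ S, ∀ y ∈ S, dist x y ≤ 3*q := by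
    intro x hx y hy
    rw [qslg_dist_eq]
    have hx0 := abs_le.mp (hSq x hx 0); have hx1 := abs_le.mp (hSq x hx 1)
    have hy0 := abs_le.mp (hSq y hy 0); have hy1 := abs_le.mp (hSq y hy 1)
    calc Real.sqrt ((x 0 - y 0)^2 + (x 1 - y 1)^2)
        ≤ Real.sqrt ((3*q)^2) := Real.sqrt_le_sqrt (by nlinarith)
      _ = 3*q := Real.sqrt_sq (by linarith)
  -- finiteness of S via binning
  have hfin : S.Finite := by
    set h : ℝ := η₀/2 with hh
    have hhpos : 0 < h := by positivity
    set f : E2 → ℤ × ℤ := fun x => (⌊x 0 / h⌋, ⌊x 1 / h⌋) with hf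
    have hinj : Set.InjOn f S := by
      intro x hx y hy hxy
      by_contra hne
      have hs := hsep x (hSA x hx) y (hSA y hy) hne
      simp only [hf, Prod.mk.injEq] at hxy
      have d0 := qslg_bin_close hhpos hxy.1
      have d1 := qslg_bin_close hhpos hxy.2
      have := qslg_dist_lt hhpos d0 d1
      rw [hh] at this
      linarith
    have himg : f '' S ⊆ ↑((Finset.Icc ⌊(-q)/h⌋ ⌊q/h⌋) ×ˢ (Finset.Icc ⌊(-q)/h⌋ ⌊q/h⌋)) := by
      rintro _ ⟨x, hx, rfl⟩
      have h0 := abs_le.mp (hSq x hx 0)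
      have h1 := abs_le.mp (hSq x hx 1)
      simp only [Finset.coe_product, Set.mem_prod, Finset.mem_coe, Finset.mem_Icc, hf]
      exact ⟨⟨Int.floor_mono (by gcongr; exact h0.1), Int.floor_mono (by gcongr; exact h0.2)⟩,
             ⟨Int.floor_mono (by gcongr; exact h1.1), Int.floor_mono (by gcongr; exact h1.2)⟩⟩
    exact Set.Finite.of_finite_image ((Finset.finite_toSet _).subset himg) hinj
  refine ⟨hfin, ?_⟩
  set F := hfin.toFinset with hFdef
  have hFS : ∀ x, x ∈ F ↔ x ∈ S := fun x => Set.Finite.mem_toFinset hfin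
  have hncard : (S.ncard : ℝ) = (F.card : ℝ) := by
    rw [Set.ncard_eq_toFinset_card S hfin]
  -- maximal R-separated subset of F
  obtain ⟨P, hPmem, hPmax⟩ := Finset.exists_max_image
    (F.powerset.filter fun P => ∀ x ∈ P, ∀ y ∈ P, x ≠ y → R ≤ dist x y) Finset.card
    ⟨∅, by simp⟩
  rw [Finset.mem_filter, Finset.mem_powerset] at hPmem
  obtain ⟨hPF, hPgood⟩ := hPmem
  -- every point of F is within R of P
  have hcover : ∀ x ∈ F, ∃ p ∈ P, dist x p ≤ R := by
    intro x hx
    by_cases hxP : x ∈ P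
    · exact ⟨x, hxP, by simp [hRpos.le]⟩
    by_contra hnone
    push_neg at hnone
    have hins : insert x P ∈
        F.powerset.filter fun P => ∀ x ∈ P, ∀ y ∈ P, x ≠ y → R ≤ dist x y := by
      rw [Finset.mem_filter, Finset.mem_powerset]
      refine ⟨Finset.insert_subset_iff.mpr ⟨hx, hPF⟩, ?_⟩
      intro y hy z hz hyz
      rcases Finset.mem_insert.mp hy with rfl | hy'
      · rcases Finset.mem_insert.mp hz with rfl | hz'
        · exact absurd rfl hyz
        · exact (hnone z hz').le
      · rcases Finset.mem_insert.mp hz with rfl | hz'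
        · rw [dist_comm]; exact (hnone y hy').le
        · exact hPgood y hy' z hz' hyz
    have hle := hPmax _ hins
    have hcd : (insert x P).card = P.card + 1 := Finset.card_insert_of_notMem hxP
    omega
  -- each ball of radius R contains at most K points of F
  have hball : ∀ p ∈ P, ((F.filter fun x => dist x p ≤ R).card : ℝ) ≤ K := by
    intro p hp
    rw [hKdef]
    apply qslg_card_sep_ball _ η₀ R hη₀ hRpos p
    · intro x hx; exact (Finset.mem_filter.mp hx).2
    · intro x hx y hy hxy
      exact hsep x (hSA x ((hFS x).mp (Finset.mem_filter.mp hx).1))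
        y (hSA y ((hFS y).mp (Finset.mem_filter.mp hy).1)) hxy
  -- F is covered by the balls
  have hFcard : (F.card : ℝ) ≤ (P.card : ℝ) * K := by
    have hsub : F ⊆ P.biUnion (fun p => F.filter fun x => dist x p ≤ R) := by
      intro x hx
      rcases hcover x hx with ⟨p, hp, hd⟩
      exact Finset.mem_biUnion.mpr ⟨p, hp, Finset.mem_filter.mpr ⟨hx, hd⟩⟩
    have h1 : F.card ≤ ∑ p ∈ P, (F.filter fun x => dist x p ≤ R).card :=
      (Finset.card_le_card hsub).trans Finset.card_biUnion_le
    have h2 : (F.card : ℝ) ≤ ∑ p ∈ P, ((F.filter fun x => dist x p ≤ R).card : ℝ) := by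
      exact_mod_cast h1
    refine h2.trans ?_
    have := Finset.sum_le_card_nsmul P (fun p => ((F.filter fun x => dist x p ≤ R).card : ℝ)) K
      hball
    simpa [nsmul_eq_mul] using this
  -- the separated set P has at most 483 q points
  have hPcard : (P.card : ℝ) ≤ 483 * q := by
    rcases Finset.eq_empty_or_nonempty P with rfl | ⟨a, ha⟩
    · simp; positivity
    · have haS : a ∈ S := (hFS a).mp (hPF ha)
      -- angle map centered at a
      set θ : E2 → ℝ := fun x => Complex.arg ⟨x 0 - a 0, x 1 - a 1⟩ with hθ
      -- angular separation
      have hsepθ : ∀ b ∈ P.erase a, ∀ c ∈ P.erase a, b ≠ c → 1/(60*q) ≤ |θ b - θ c| := by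
        intro b hb c hc hbc
        have hbP := Finset.mem_of_mem_erase hb
        have hcP := Finset.mem_of_mem_erase hc
        have hba : b ≠ a := Finset.ne_of_mem_erase hb
        have hca : c ≠ a := Finset.ne_of_mem_erase hc
        have hbS := (hFS b).mp (hPF hbP)
        have hcS := (hFS c).mp (hPF hcP)
        have hbA := hSA b hbS; have hcA := hSA c hcS; have haA := hSA a haS
        have hdab : R ≤ dist a b := hPgood a ha b hbP (Ne.symm hba)
        have hdac : R ≤ dist a c := hPgood a ha c hcP (Ne.symm hca)
        have hdbc : R ≤ dist b c := hPgood b hbP c hcP hbc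
        -- quantization witnesses
        obtain ⟨k1, hk1⟩ := hquant a haA b hbA (Ne.symm hba)
        obtain ⟨k2, hk2⟩ := hquant b hbA c hcA hbc
        obtain ⟨k3, hk3⟩ := hquant a haA c hcA (Ne.symm hca)
        have hgapA : 1/20 ≤ dist a b + dist b c - dist a c :=
          qslg_gap hC₃ k1 k2 k3 hk1 hk2 hk3 hdab hdbc hdac (dist_triangle a b c)
        obtain ⟨k2', hk2'⟩ := hquant c hcA b hbA (Ne.symm hbc)
        have hgapB : 1/20 ≤ dist a c + dist c b - dist a b :=
          qslg_gap hC₃ k3 k2' k1 hk3 hk2' hk1 hdac (dist_comm b c ▸ hdbc) hdab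
            (dist_triangle a c b)
        -- set up complex vectors
        set wb : ℂ := ⟨b 0 - a 0, b 1 - a 1⟩ with hwb
        set wc : ℂ := ⟨c 0 - a 0, c 1 - a 1⟩ with hwc
        have habsb : ‖wb‖ = dist a b := by
          rw [hwb, dist_comm, qslg_dist_complex b a]
        have habsc : ‖wc‖ = dist a c := by
          rw [hwc, dist_comm, qslg_dist_complex c a]
        have hdiff : wb - wc = (⟨b 0 - c 0, b 1 - c 1⟩ : ℂ) := by
          rw [hwb, hwc]
          apply Complex.ext <;> simp
        have habsd : ‖wb - wc‖ = dist b c := by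
          rw [hdiff, qslg_dist_complex b c]
        have hcb : dist c b = dist b c := dist_comm c b
        apply qslg_angle_sep habsb habsc (lt_of_lt_of_le hRpos hdab)
          (lt_of_lt_of_le hRpos hdac) (h3q a haS b hbS) (h3q a haS c hcS) hq
        · rw [habsd]; linarith
        · rw [habsd]; linarith
      -- count the angles
      set T : Finset ℝ := (P.erase a).image θ with hT
      have hinjθ : Set.InjOn θ ↑(P.erase a) := by
        intro b hb c hc hbc
        by_contra hne
        have hthis := hsepθ b hb c hc hne
        rw [hbc] at hthis
        simp only [sub_self, abs_zero] at hthis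
        have hpos : (0:ℝ) < 1/(60*q) := by positivity
        linarith
      have hTcard : T.card = (P.erase a).card := Finset.card_image_of_injOn hinjθ
      have hTbound : (T.card : ℝ) ≤ (4 - (-4))/(1/(60*q)) + 2 := by
        apply qslg_card_sep_interval T (1/(60*q)) (-4) 4 (by positivity) (by norm_num)
        · intro x hx
          obtain ⟨b, hb, rfl⟩ := Finset.mem_image.mp hx
          have h1 := Complex.neg_pi_lt_arg (⟨b 0 - a 0, b 1 - a 1⟩ : ℂ)
          have h2 := Complex.arg_le_pi (⟨b 0 - a 0, b 1 - a 1⟩ : ℂ)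
          have hpi := Real.pi_le_four
          constructor
          · simp only [hθ]; linarith
          · simp only [hθ]; linarith
        · intro x hx y hy hxy
          obtain ⟨b, hb, rfl⟩ := Finset.mem_image.mp hx
          obtain ⟨c, hc, rfl⟩ := Finset.mem_image.mp hy
          have hbc : b ≠ c := fun h => hxy (by rw [h])
          exact hsepθ b hb c hc hbc
      have hdiv : (4 - (-4))/(1/(60*q)) = 480*q := by
        field_simp
        ring
      have herase : (P.erase a).card + 1 = P.card := Finset.card_erase_add_one ha
      have : ((P.erase a).card : ℝ) ≤ 480*q + 2 := by
        rw [← hTcard]; rw [hdiv] at hTbound; exact hTbound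
      have hPc : (P.card : ℝ) = ((P.erase a).card : ℝ) + 1 := by exact_mod_cast herase.symm
      rw [hPc]
      nlinarith
  -- conclude
  rw [hncard]
  calc (F.card : ℝ) ≤ (P.card : ℝ) * K := hFcard
    _ ≤ (483 * q) * K := by nlinarith
    _ = 483 * K * q := by ring
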